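/- The series ∑_{k=1}^∞ (-1)^k · (ln(k) + γ)/k converges and equals -(1/2)(ln 2)², where γ is the Euler–Mascheroni constant. -/

import Mathlib

open Real Filter Finset

noncomputable def Sγ (N : ℕ) : ℝ := ∑ k ∈ Finset.range N,
    (-1 : ℝ) ^ (k + 1) *
      (Real.log ((k + 1 : ℕ) : ℝ) + Real.eulerMascheroniConstant) / ((k + 1 : ℕ) : ℝ)

noncomputable def Hs (n : ℕ) : ℝ := ∑ k ∈ Finset.range n, (1 : ℝ) / ((k : ℝ) + 1)
noncomputable def Ls (n : ℕ) : ℝ := ∑ k ∈ Finset.range n, Real.log ((k : ℝ) + 1) / ((k : ℝ) + 1)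

lemma key_identity (N : ℕ) :
    Sγ (2 * N) = (∑ m ∈ Finset.range N,
        (Real.log 2 + Real.log ((m : ℝ) + 1) + Real.eulerMascheroniConstant) / ((m : ℝ) + 1))
      - ∑ n ∈ Finset.range (2 * N),
        (Real.log ((n : ℝ) + 1) + Real.eulerMascheroniConstant) / ((n : ℝ) + 1) := by
  induction N with
  | zero => simp [Sγ]
  | succ N ih =>
    have h2 : 2 * (N + 1) = (2 * N) + 1 + 1 := by ring
    rw [h2]
    rw [Sγ, Finset.sum_range_succ, Finset.sum_range_succ, ← Sγ, ih,
      Finset.sum_range_succ (n := N), Finset.sum_range_succ, Finset.sum_range_succ]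
    have hlog : Real.log ((2 * N + 1 : ℕ) + 1 : ℝ) = Real.log 2 + Real.log ((N : ℝ) + 1) := by
      rw [← Real.log_mul (by norm_num) (by positivity)]
      norm_num; ring_nf
    have hsign1 : (-1 : ℝ) ^ (2 * N + 1) = -1 := by
      simp [pow_succ, pow_mul]
    have hsign2 : (-1 : ℝ) ^ (2 * N + 1 + 1) = 1 := by
      simp [pow_succ, pow_mul]
    push_cast
    rw [hsign1, hsign2]
    push_cast at hlog
    rw [hlog]
    have hN : ((N : ℝ) + 1) ≠ 0 := by positivity
    field_simp
    ring

lemma harmonic_eq (n : ℕ) : ((harmonic n : ℚ) : ℝ) = Hs n := by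
  rw [harmonic, Hs]
  push_cast
  simp [one_div]

lemma tendsto_Hs_sub_log :
    Tendsto (fun n => Hs n - Real.log n) atTop (nhds Real.eulerMascheroniConstant) := by
  have := Real.tendsto_harmonic_sub_log
  refine this.congr fun n => by rw [harmonic_eq]

lemma split_sum (N : ℕ) :
    (∑ m ∈ Finset.range N,
      (Real.log 2 + Real.log ((m : ℝ) + 1) + Real.eulerMascheroniConstant) / ((m : ℝ) + 1))
    = Real.log 2 * Hs N + Ls N + Real.eulerMascheroniConstant * Hs N := by
  rw [Hs, Ls, Finset.mul_sum, Finset.mul_sum, ← Finset.sum_add_distrib, ← Finset.sum_add_distrib]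
  refine Finset.sum_congr rfl fun m _ => by field_simp

lemma split_sum2 (n : ℕ) :
    (∑ k ∈ Finset.range n,
      (Real.log ((k : ℝ) + 1) + Real.eulerMascheroniConstant) / ((k : ℝ) + 1))
    = Ls n + Real.eulerMascheroniConstant * Hs n := by
  rw [Hs, Ls, Finset.mul_sum, ← Finset.sum_add_distrib]
  refine Finset.sum_congr rfl fun m _ => by field_simp

lemma integral_log_div (a b : ℝ) (ha : 0 < a) (hab : a ≤ b) :
    ∫ x in a..b, Real.log x / x = Real.log b ^ 2 / 2 - Real.log a ^ 2 / 2 := by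
  have hsub : Set.uIcc a b ⊆ Set.Ioi (0:ℝ) := by
    rw [Set.uIcc_of_le hab]
    exact fun x hx => lt_of_lt_of_le ha hx.1
  refine intervalIntegral.integral_eq_sub_of_hasDerivAt (f := fun x => Real.log x ^ 2 / 2)
    (f' := fun x => Real.log x / x) (fun x hx => ?_) ?_
  · have hx0 : x ≠ 0 := ne_of_gt (hsub hx)
    have h := ((Real.hasDerivAt_log hx0).pow 2).div_const 2
    convert h using 1
    · rfl
    · rfl
    · rw [show (2:ℕ) - 1 = 1 from rfl, pow_one]
      push_cast
      ring
  · apply ContinuousOn.intervalIntegrable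
    apply ContinuousOn.div
    · exact Real.continuousOn_log.mono (fun x hx => ne_of_gt (hsub hx))
    · exact continuousOn_id
    · exact fun x hx => ne_of_gt (hsub hx)

lemma Ls_diff_eq (N : ℕ) :
    Ls (2 * N) - Ls N =
      ∑ i ∈ Finset.range N, Real.log ((N : ℝ) + (i + 1 : ℕ)) / ((N : ℝ) + (i + 1 : ℕ)) := by
  rw [Ls, Ls, ← Finset.sum_Ico_eq_sub _ (by omega)]
  rw [Finset.sum_Ico_eq_sum_range]
  have : 2 * N - N = N := by omega
  rw [this]
  refine Finset.sum_congr rfl fun i _ => by push_cast; ring_nf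

lemma sum_shift' (c : ℝ) (N : ℕ) (f : ℝ → ℝ) :
    ∑ i ∈ Finset.range N, f (c + i)
      = ∑ i ∈ Finset.range N, f (c + (i + 1 : ℕ)) + f c - f (c + N) := by
  induction N with
  | zero => simp
  | succ M ih =>
    rw [Finset.sum_range_succ, ih, Finset.sum_range_succ]
    push_cast
    ring

lemma sum_shift (N : ℕ) (f : ℝ → ℝ) :
    ∑ i ∈ Finset.range N, f ((N : ℝ) + i)
      = ∑ i ∈ Finset.range N, f ((N : ℝ) + (i + 1 : ℕ)) + f N - f ((N : ℝ) + N) := by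
  exact sum_shift' N N f

lemma Ls_bounds (N : ℕ) (hN : 3 ≤ N) :
    Real.log 2 ^ 2 / 2 + Real.log 2 * Real.log N - Real.log N / N
      ≤ Ls (2 * N) - Ls N ∧
    Ls (2 * N) - Ls N ≤ Real.log 2 ^ 2 / 2 + Real.log 2 * Real.log N := by
  set f : ℝ → ℝ := fun x => Real.log x / x with hf
  have hNR : (3:ℝ) ≤ N := by exact_mod_cast hN
  have hanti : AntitoneOn f (Set.Icc (N : ℝ) ((N : ℝ) + N)) := by
    apply Real.log_div_self_antitoneOn.mono
    intro x hx
    have : Real.exp 1 < 3 := by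
      have := Real.exp_one_lt_d9
      norm_num at this ⊢
      linarith
    exact le_trans (le_of_lt this) (le_trans hNR hx.1)
  have hub := hanti.sum_le_integral
  have hlb := hanti.integral_le_sum
  have hI : ∫ x in (N:ℝ)..((N:ℝ) + N), f x
      = Real.log 2 ^ 2 / 2 + Real.log 2 * Real.log N := by
    rw [hf]
    rw [integral_log_div N ((N:ℝ)+N) (by linarith) (by linarith)]
    have h2N : Real.log ((N:ℝ) + N) = Real.log 2 + Real.log N := by
      rw [show (N:ℝ) + N = 2 * N by ring, Real.log_mul (by norm_num) (by linarith)]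
    rw [h2N]
    ring
  rw [hI] at hub hlb
  rw [Ls_diff_eq]
  have hshift := sum_shift N f
  constructor
  · have hpos : 0 ≤ f ((N:ℝ) + N) := by
      apply div_nonneg _ (by linarith)
      apply Real.log_nonneg; linarith
    have : ∑ i ∈ Finset.range N, f ((N : ℝ) + i)
        ≥ Real.log 2 ^ 2 / 2 + Real.log 2 * Real.log N := hlb
    have hfN : f (N:ℝ) = Real.log N / N := rfl
    rw [hshift] at this
    simp only [hf] at this ⊢
    linarith
  · exact hub

lemma f_tendsto : Tendsto (fun n : ℕ => Real.log n / n) atTop (nhds 0) :=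
  (Real.isLittleO_log_id_atTop.tendsto_div_nhds_zero).comp tendsto_natCast_atTop_atTop

lemma two_mul_tendsto : Tendsto (fun N : ℕ => 2 * N) atTop atTop :=
  tendsto_atTop_mono (fun n => by simp; omega) tendsto_id

lemma seq3_tendsto :
    Tendsto (fun N : ℕ => Ls (2 * N) - Ls N - Real.log 2 * Real.log N) atTop
      (nhds (Real.log 2 ^ 2 / 2)) := by
  have hlow : Tendsto (fun N : ℕ => Real.log 2 ^ 2 / 2 - Real.log N / N) atTop
      (nhds (Real.log 2 ^ 2 / 2)) := by
    have := (tendsto_const_nhds (x := Real.log 2 ^ 2 / 2) (f := atTop (α := ℕ))).sub f_tendsto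
    simpa using this
  refine tendsto_of_tendsto_of_tendsto_of_le_of_le' hlow tendsto_const_nhds ?_ ?_
  · filter_upwards [eventually_ge_atTop 3] with N hN
    have := (Ls_bounds N hN).1
    linarith
  · filter_upwards [eventually_ge_atTop 3] with N hN
    have := (Ls_bounds N hN).2
    linarith

lemma tendsto_even :
    Tendsto (fun N : ℕ => Sγ (2 * N)) atTop
      (nhds (-(1 / 2) * (Real.log 2) ^ 2)) := by
  have t1 := tendsto_Hs_sub_log
  have t2 : Tendsto (fun N : ℕ => Hs (2 * N) - Real.log ((2 * N : ℕ) : ℝ)) atTop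
      (nhds Real.eulerMascheroniConstant) := t1.comp two_mul_tendsto
  have t3 := seq3_tendsto
  have comb : Tendsto (fun N : ℕ =>
      Real.log 2 * (Hs N - Real.log N)
        - (Ls (2 * N) - Ls N - Real.log 2 * Real.log N)
        + Real.eulerMascheroniConstant *
            ((Hs N - Real.log N) - (Hs (2 * N) - Real.log ((2 * N : ℕ) : ℝ)))
        - Real.eulerMascheroniConstant * Real.log 2) atTop
      (nhds (Real.log 2 * Real.eulerMascheroniConstant - Real.log 2 ^ 2 / 2
        + Real.eulerMascheroniConstant *
            (Real.eulerMascheroniConstant - Real.eulerMascheroniConstant)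
        - Real.eulerMascheroniConstant * Real.log 2)) := by
    exact (((t1.const_mul _).sub t3).add ((t1.sub t2).const_mul _)).sub tendsto_const_nhds
  have hval : Real.log 2 * Real.eulerMascheroniConstant - Real.log 2 ^ 2 / 2
        + Real.eulerMascheroniConstant *
            (Real.eulerMascheroniConstant - Real.eulerMascheroniConstant)
        - Real.eulerMascheroniConstant * Real.log 2 = -(1 / 2) * (Real.log 2) ^ 2 := by ring
  rw [hval] at comb
  refine comb.congr' ?_
  filter_upwards [eventually_ge_atTop 1] with N hN
  have hNR : (1:ℝ) ≤ N := by exact_mod_cast hN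
  have hlog : Real.log ((2 * N : ℕ) : ℝ) = Real.log 2 + Real.log N := by
    push_cast
    rw [Real.log_mul (by norm_num) (by positivity)]
  rw [key_identity, split_sum, split_sum2, hlog]
  ring

lemma tendsto_parity {u : ℕ → ℝ} {l : ℝ}
    (he : Tendsto (fun n => u (2 * n)) atTop (nhds l))
    (ho : Tendsto (fun n => u (2 * n + 1)) atTop (nhds l)) :
    Tendsto u atTop (nhds l) := by
  rw [Metric.tendsto_atTop] at he ho ⊢
  intro ε hε
  obtain ⟨N1, h1⟩ := he ε hε
  obtain ⟨N2, h2⟩ := ho ε hε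
  refine ⟨2 * N1 + 2 * N2 + 2, fun n hn => ?_⟩
  rcases Nat.even_or_odd n with ⟨k, hk⟩ | ⟨k, hk⟩
  · have hnk : n = 2 * k := by omega
    rw [hnk]; exact h1 k (by omega)
  · have hnk : n = 2 * k + 1 := by omega
    rw [hnk]; exact h2 k (by omega)

lemma tail_tendsto :
    Tendsto (fun N : ℕ =>
      (Real.log ((2 * N + 1 : ℕ) : ℝ) + Real.eulerMascheroniConstant) / ((2 * N + 1 : ℕ) : ℝ))
      atTop (nhds 0) := by
  have ht : Tendsto (fun N : ℕ => 2 * N + 1) atTop atTop :=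
    tendsto_atTop_mono (fun n => by simp; omega) tendsto_id
  have h1 : Tendsto (fun N : ℕ => Real.log ((2 * N + 1 : ℕ) : ℝ) / ((2 * N + 1 : ℕ) : ℝ))
      atTop (nhds 0) := f_tendsto.comp ht
  have h2 : Tendsto (fun N : ℕ =>
      Real.eulerMascheroniConstant * (1 / ((2 * N + 1 : ℕ) : ℝ))) atTop (nhds 0) := by
    have := (tendsto_one_div_atTop_nhds_zero_nat (𝕜 := ℝ)).comp ht
    have := this.const_mul Real.eulerMascheroniConstant
    simpa using this
  have := h1.add h2
  rw [add_zero] at this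
  refine this.congr fun N => ?_
  rw [add_div]
  congr 1
  rw [mul_one_div]

lemma tendsto_odd :
    Tendsto (fun N : ℕ => Sγ (2 * N + 1)) atTop
      (nhds (-(1 / 2) * (Real.log 2) ^ 2)) := by
  have h := tendsto_even.sub tail_tendsto
  rw [sub_zero] at h
  refine h.congr fun N => ?_
  conv_rhs => rw [Sγ, Finset.sum_range_succ, ← Sγ]
  have hsign : (-1 : ℝ) ^ (2 * N + 1) = -1 := by simp [pow_succ, pow_mul]
  rw [hsign]
  ring

/-- The series `∑_{k=1}^∞ (-1)^k (ln k + γ)/k` converges to `-(1/2)(ln 2)²`,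
where `γ` is the Euler–Mascheroni constant. -/
theorem alt_log_add_gamma_div_self_sum :
    Tendsto (fun N => ∑ k ∈ Finset.range N,
        (-1 : ℝ) ^ (k + 1) *
          (Real.log ((k + 1 : ℕ) : ℝ) + Real.eulerMascheroniConstant) / ((k + 1 : ℕ) : ℝ))
      atTop (nhds (-(1 / 2) * (Real.log 2) ^ 2)) := by
  exact tendsto_parity tendsto_even tendsto_odd
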